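/- For every θ₃ ∈ ℝ, the equilateral configuration θ₁ = θ₃ − 2π/3, θ₂ = θ₃ + 2π/3, θ₃ with ω = 0 satisfies the equations of motion; in particular, for each k = 1,2,3, Σ_{i≠k} sin(θ_k−θ_i)/|sin(θ_k−θ_i)|³ = 0. Hence the equilateral shape with all arc angles 2π/3 is a fixed point and the individual angles θ_k are arbitrary. -/
import Mathlib


open Real

/-- For every θ₃, the equilateral configuration θ₁ = θ₃ − 2π/3, θ₂ = θ₃ + 2π/3, θ₃
with ω = 0 satisfies the equations of motion; in particular every force sum vanishes.
Hence the equilateral shape is a fixed point and the individual angles are arbitrary. -/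
theorem stmt_15 (θ₃ : ℝ) (θ₁ θ₂ ω : ℝ)
    (h1 : θ₁ = θ₃ - 2 * π / 3) (h2 : θ₂ = θ₃ + 2 * π / 3) (hω : ω = 0) :
    (sin (θ₁ - θ₂) / |sin (θ₁ - θ₂)| ^ 3 + sin (θ₁ - θ₃) / |sin (θ₁ - θ₃)| ^ 3 = 0) ∧
    (sin (θ₂ - θ₁) / |sin (θ₂ - θ₁)| ^ 3 + sin (θ₂ - θ₃) / |sin (θ₂ - θ₃)| ^ 3 = 0) ∧
    (sin (θ₃ - θ₁) / |sin (θ₃ - θ₁)| ^ 3 + sin (θ₃ - θ₂) / |sin (θ₃ - θ₂)| ^ 3 = 0) ∧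
    (ω ^ 2 / 2 * sin (2 * θ₁)
      = sin (θ₁ - θ₂) / |sin (θ₁ - θ₂)| ^ 3 + sin (θ₁ - θ₃) / |sin (θ₁ - θ₃)| ^ 3) ∧
    (ω ^ 2 / 2 * sin (2 * θ₂)
      = sin (θ₂ - θ₁) / |sin (θ₂ - θ₁)| ^ 3 + sin (θ₂ - θ₃) / |sin (θ₂ - θ₃)| ^ 3) ∧
    (ω ^ 2 / 2 * sin (2 * θ₃)
      = sin (θ₃ - θ₁) / |sin (θ₃ - θ₁)| ^ 3 + sin (θ₃ - θ₂) / |sin (θ₃ - θ₂)| ^ 3) := by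
  subst h1 h2 hω
  have e12 : θ₃ - 2 * π / 3 - (θ₃ + 2 * π / 3) = -(4 * (π / 3)) := by ring
  have e13 : θ₃ - 2 * π / 3 - θ₃ = -(2 * (π / 3)) := by ring
  have e21 : θ₃ + 2 * π / 3 - (θ₃ - 2 * π / 3) = 4 * (π / 3) := by ring
  have e23 : θ₃ + 2 * π / 3 - θ₃ = 2 * (π / 3) := by ring
  have e31 : θ₃ - (θ₃ - 2 * π / 3) = 2 * (π / 3) := by ring
  have e32 : θ₃ - (θ₃ + 2 * π / 3) = -(2 * (π / 3)) := by ring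
  have hs2 : sin (2 * (π / 3)) = Real.sqrt 3 / 2 := by
    have : (2 : ℝ) * (π / 3) = π - π / 3 := by ring
    rw [this, Real.sin_pi_sub, Real.sin_pi_div_three]
  have hs4 : sin (4 * (π / 3)) = -(Real.sqrt 3 / 2) := by
    have : (4 : ℝ) * (π / 3) = π + π / 3 := by ring
    rw [this]
    simp [Real.sin_add, Real.sin_pi_div_three]
  have hpos : (0 : ℝ) < Real.sqrt 3 / 2 := by positivity
  have habs : |Real.sqrt 3 / 2| = Real.sqrt 3 / 2 := abs_of_pos hpos
  rw [e12, e13, e21, e23, e31, e32]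
  simp only [Real.sin_neg, hs2, hs4, abs_neg, neg_neg, habs]
  refine ⟨by ring, by ring, by ring, by ring, by ring, by ring⟩
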